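/- Let f, g, h : Bool × Bool × Bool → Bool be local rules of elementary cellular automata. If f ≤ₖ g with witnessing encoding φ : Bool → Bool^k and g ≤ₗ h with witnessing encoding ψ : Bool → Bool^l, then f ≤_{kl} h, and a witnessing encoding is enc = ψ̄ ∘ φ : Bool → Bool^{kl}, where ψ̄ applies ψ to each entry of a Boolean sequence and concatenates. -/

import Mathlib

/-- The unravelling of a local rule `f`: it maps a sequence `(b₁,…,bₙ)` (for `n ≥ 3`) to
`(f(b₁,b₂,b₃), f(b₂,b₃,b₄), …, f(b_{n-2},b_{n-1},bₙ))` of length `n - 2`. -/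
def unravel {S : Type*} (f : S × S × S → S) : List S → List S
  | a :: b :: c :: rest => f (a, b, c) :: unravel f (b :: c :: rest)
  | _ => []

/-- Entrywise encoding `ē`: replace each entry by its block and concatenate. -/
def ebar {S T : Type*} (e : S → List T) (c : List S) : List T :=
  (c.map e).flatten

/-- `f ≤ₖ g`: the ECA rule `f` is emulated by `g` with supercell size `k`. -/
def Emulates (f g : Bool × Bool × Bool → Bool) (k : ℕ) : Prop :=
  ∃ enc : Bool → List Bool, Function.Injective enc ∧ (∀ b, (enc b).length = k) ∧
    ∀ s₁ s₂ s₃ : Bool,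
      enc (f (s₁, s₂, s₃)) = (unravel g)^[k] (enc s₁ ++ enc s₂ ++ enc s₃)

section Aux
variable {S T : Type*}

theorem unravel_len (f : S × S × S → S) : ∀ c : List S, (unravel f c).length = c.length - 2
  | [] => rfl
  | [_] => rfl
  | [_, _] => rfl
  | a :: b :: c :: r => by
    have := unravel_len f (b :: c :: r)
    simp [unravel] at *
    omega

theorem unravel_iter_len (f : S × S × S → S) (j : ℕ) (c : List S) :
    ((unravel f)^[j] c).length = c.length - 2 * j := by
  induction j generalizing c with
  | zero => simp
  | succ j ih =>
    rw [Function.iterate_succ_apply, ih, unravel_len]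
    omega

theorem unravel_append (f : S × S × S → S) :
    ∀ (x : List S) (y1 y2 : S) (yr : List S),
      unravel f (x ++ y1 :: y2 :: yr) =
        unravel f (x ++ [y1, y2]) ++ unravel f (y1 :: y2 :: yr)
  | [], y1, y2, yr => by simp [unravel]
  | [a], y1, y2, yr => by simp [unravel]
  | a :: b :: x'', y1, y2, yr => by
    cases x'' with
    | nil => simp [unravel]
    | cons e x3 =>
      have := unravel_append f (b :: e :: x3) y1 y2 yr
      simp only [List.cons_append, List.append_eq, unravel] at *
      rw [this]

theorem unravel_take (f : S × S × S → S) :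
    ∀ (c : List S) (n : ℕ), unravel f (c.take (n + 2)) = (unravel f c).take n
  | [], n => by simp [unravel]
  | [a], n => by
    have : ([a] : List S).take (n+2) = [a] := List.take_of_length_le (by simp)
    simp [this, unravel]
  | [a, b], n => by
    have : ([a, b] : List S).take (n+2) = [a, b] := List.take_of_length_le (by simp)
    simp [this, unravel]
  | a :: b :: d :: r, 0 => by simp [unravel]
  | a :: b :: d :: r, n + 1 => by
    have ih := unravel_take f (b :: d :: r) n
    simp only [List.take, unravel] at *
    rw [← ih]

theorem iter_split (f : S × S × S → S) :
    ∀ (j : ℕ) (x y : List S), 2 * j ≤ y.length →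
      (unravel f)^[j] (x ++ y) =
        (unravel f)^[j] (x ++ y.take (2 * j)) ++ (unravel f)^[j] y := by
  intro j
  induction j with
  | zero => intro x y _; simp
  | succ j ih =>
    intro x y hy
    obtain ⟨y1, y2, yr, rfl⟩ : ∃ y1 y2 yr, y = y1 :: y2 :: yr := by
      match y, hy with
      | y1 :: y2 :: yr, _ => exact ⟨y1, y2, yr, rfl⟩
      | [], hy => simp only [List.length_nil] at hy; omega
      | [a], hy => simp only [List.length_cons, List.length_nil] at hy; omega
    have hlen : 2 * j ≤ (unravel f (y1 :: y2 :: yr)).length := by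
      rw [unravel_len]
      simp only [List.length_cons] at hy ⊢
      omega
    have key : unravel f (x ++ (y1 :: y2 :: yr).take (2 * (j + 1))) =
        unravel f (x ++ [y1, y2]) ++ (unravel f (y1 :: y2 :: yr)).take (2 * j) := by
      have h1 : (y1 :: y2 :: yr).take (2 * (j + 1)) = y1 :: y2 :: yr.take (2 * j) := by
        rw [show 2 * (j + 1) = 2 * j + 2 from by ring]; rfl
      have h2 : (y1 :: y2 :: yr).take (2 * j + 2) = y1 :: y2 :: yr.take (2 * j) := rfl
      rw [h1, unravel_append, ← h2, unravel_take]
    rw [Function.iterate_succ_apply, Function.iterate_succ_apply,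
      Function.iterate_succ_apply, unravel_append, key, ih _ _ hlen]

theorem ebar_cons (e : S → List T) (a : S) (c : List S) :
    ebar e (a :: c) = e a ++ ebar e c := by simp [ebar]

theorem ebar_append (e : S → List T) (c d : List S) :
    ebar e (c ++ d) = ebar e c ++ ebar e d := by simp [ebar]

theorem ebar_len (e : S → List T) (l : ℕ) (h : ∀ b, (e b).length = l) :
    ∀ c : List S, (ebar e c).length = c.length * l
  | [] => by simp [ebar]
  | a :: r => by
    rw [ebar_cons]
    simp [h, ebar_len e l h r]
    ring

end Aux

theorem ebar_unravel (g h : Bool × Bool × Bool → Bool) (l : ℕ)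
    (ψ : Bool → List Bool)
    (hψ_len : ∀ b, (ψ b).length = l)
    (hψ : ∀ s₁ s₂ s₃ : Bool,
      ψ (g (s₁, s₂, s₃)) = (unravel h)^[l] (ψ s₁ ++ ψ s₂ ++ ψ s₃)) :
    ∀ c : List Bool, ebar ψ (unravel g c) = (unravel h)^[l] (ebar ψ c)
  | [] => by
    symm
    refine List.eq_nil_of_length_eq_zero ?_
    rw [unravel_iter_len, ebar_len ψ l hψ_len]
    simp
  | [a] => by
    symm
    refine List.eq_nil_of_length_eq_zero ?_
    rw [unravel_iter_len, ebar_len ψ l hψ_len]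
    simp only [List.length_cons, List.length_nil]
    omega
  | [a, b] => by
    symm
    refine List.eq_nil_of_length_eq_zero ?_
    rw [unravel_iter_len, ebar_len ψ l hψ_len]
    simp only [List.length_cons, List.length_nil]
    omega
  | a :: b :: d :: r => by
    have hsplit := iter_split h l (ψ a) (ebar ψ (b :: d :: r))
      (by
        rw [ebar_len ψ l hψ_len]
        simp only [List.length_cons]
        calc 2 * l = 2 * l := rfl
          _ ≤ (r.length + 1 + 1) * l := Nat.mul_le_mul_right l (by omega))
    have htake : (ebar ψ (b :: d :: r)).take (2 * l) = ψ b ++ ψ d := by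
      rw [ebar_cons, ebar_cons, ← List.append_assoc,
        show 2 * l = (ψ b ++ ψ d).length from by simp [hψ_len]; ring]
      exact List.take_left
    rw [show unravel g (a :: b :: d :: r) = g (a, b, d) :: unravel g (b :: d :: r) from rfl,
      ebar_cons, ebar_cons, hsplit, htake,
      ← List.append_assoc, ← hψ a b d,
      ebar_unravel g h l ψ hψ_len hψ (b :: d :: r)]

theorem ebar_unravel_iter (g h : Bool × Bool × Bool → Bool) (l : ℕ)
    (ψ : Bool → List Bool)
    (hψ_len : ∀ b, (ψ b).length = l)
    (hψ : ∀ s₁ s₂ s₃ : Bool,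
      ψ (g (s₁, s₂, s₃)) = (unravel h)^[l] (ψ s₁ ++ ψ s₂ ++ ψ s₃))
    (k : ℕ) (c : List Bool) :
    ebar ψ ((unravel g)^[k] c) = (unravel h)^[k * l] (ebar ψ c) := by
  induction k generalizing c with
  | zero => simp
  | succ k ih =>
    rw [Function.iterate_succ_apply, ih,
      ebar_unravel g h l ψ hψ_len hψ,
      show (k + 1) * l = k * l + l from by ring,
      Function.iterate_add_apply]

theorem ebar_inj {S T : Type*} (e : S → List T) (l : ℕ)
    (hlen : ∀ b, (e b).length = l) (hinj : Function.Injective e) :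
    ∀ c d : List S, c.length = d.length → ebar e c = ebar e d → c = d
  | [], [], _, _ => rfl
  | a :: c, b :: d, hl, he => by
    rw [ebar_cons, ebar_cons] at he
    simp only [List.length_cons, Nat.add_right_cancel_iff] at hl
    obtain ⟨h1, h2⟩ := List.append_inj he (by rw [hlen, hlen])
    rw [hinj h1, ebar_inj e l hlen hinj c d hl h2]

/-- transitivity with explicit witness. If `φ` witnesses `f ≤ₖ g` and `ψ`
witnesses `g ≤ₗ h`, then `enc = ψ̄ ∘ φ` witnesses `f ≤_{kl} h`; in particular `f ≤_{kl} h`. -/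
theorem stmt_2 (f g h : Bool × Bool × Bool → Bool) (k l : ℕ)
    (φ : Bool → List Bool)
    (hφ_inj : Function.Injective φ)
    (hφ_len : ∀ b, (φ b).length = k)
    (hφ : ∀ s₁ s₂ s₃ : Bool,
      φ (f (s₁, s₂, s₃)) = (unravel g)^[k] (φ s₁ ++ φ s₂ ++ φ s₃))
    (ψ : Bool → List Bool)
    (hψ_inj : Function.Injective ψ)
    (hψ_len : ∀ b, (ψ b).length = l)
    (hψ : ∀ s₁ s₂ s₃ : Bool,
      ψ (g (s₁, s₂, s₃)) = (unravel h)^[l] (ψ s₁ ++ ψ s₂ ++ ψ s₃)) :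
    Function.Injective (fun b : Bool => ebar ψ (φ b)) ∧
    (∀ b : Bool, (ebar ψ (φ b)).length = k * l) ∧
    (∀ s₁ s₂ s₃ : Bool,
      ebar ψ (φ (f (s₁, s₂, s₃))) =
        (unravel h)^[k * l] (ebar ψ (φ s₁) ++ ebar ψ (φ s₂) ++ ebar ψ (φ s₃))) ∧
    Emulates f h (k * l) := by
  have hinj : Function.Injective (fun b : Bool => ebar ψ (φ b)) := by
    intro b1 b2 heq
    exact hφ_inj (ebar_inj ψ l hψ_len hψ_inj _ _
      (by rw [hφ_len, hφ_len]) heq)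
  have hlen : ∀ b : Bool, (ebar ψ (φ b)).length = k * l := by
    intro b
    rw [ebar_len ψ l hψ_len, hφ_len]
  have heq : ∀ s₁ s₂ s₃ : Bool,
      ebar ψ (φ (f (s₁, s₂, s₃))) =
        (unravel h)^[k * l] (ebar ψ (φ s₁) ++ ebar ψ (φ s₂) ++ ebar ψ (φ s₃)) := by
    intro s₁ s₂ s₃
    rw [hφ, ebar_unravel_iter g h l ψ hψ_len hψ, ebar_append, ebar_append]
  exact ⟨hinj, hlen, heq, ⟨fun b => ebar ψ (φ b), hinj, hlen, heq⟩⟩
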